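/- The set S₂₄ of simultaneous-eigenvector rays of the Peres–Mermin square is closed under Lüders measurements of the nine observables: for every L ∈ S₂₄, every nonzero ψ ∈ L, every i j : Fin 3 and every ε ∈ ({1, -1} : Set ℂ), setting Π = (1/2 : ℂ) • (1 + ε • PM i j), if Π.mulVec ψ ≠ 0 then the span of Π.mulVec ψ belongs to S₂₄. -/

import Mathlib

open Matrix Complex Kronecker

noncomputable def σx : Matrix (Fin 2) (Fin 2) ℂ := !![0, 1; 1, 0]
noncomputable def σy : Matrix (Fin 2) (Fin 2) ℂ := !![0, -I; I, 0]
noncomputable def σz : Matrix (Fin 2) (Fin 2) ℂ := !![1, 0; 0, -1]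

noncomputable def PM : Fin 3 → Fin 3 → Matrix (Fin 2 × Fin 2) (Fin 2 × Fin 2) ℂ :=
  ![![σz ⊗ₖ 1, 1 ⊗ₖ σz, σz ⊗ₖ σz],
    ![1 ⊗ₖ σx, σx ⊗ₖ 1, σx ⊗ₖ σx],
    ![σz ⊗ₖ σx, σx ⊗ₖ σz, σy ⊗ₖ σy]]

noncomputable def S₂₄ : Set (Submodule ℂ (EuclideanSpace ℂ (Fin 2 × Fin 2))) :=
  {L | ∃ ψ : EuclideanSpace ℂ (Fin 2 × Fin 2), ψ ≠ 0 ∧ L = Submodule.span ℂ {ψ} ∧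
    ((∃ i : Fin 3, ∀ j : Fin 3, ∃ c : ℂ, (PM i j).mulVec ψ = c • ψ) ∨
     (∃ j : Fin 3, ∀ i : Fin 3, ∃ c : ℂ, (PM i j).mulVec ψ = c • ψ))}

lemma sxx : σx * σx = 1 := by
  ext i j; fin_cases i <;> fin_cases j <;> simp [σx, Matrix.mul_apply, Fin.sum_univ_two, Matrix.one_apply]
lemma syy : σy * σy = 1 := by
  ext i j; fin_cases i <;> fin_cases j <;> simp [σy, Matrix.mul_apply, Fin.sum_univ_two, Matrix.one_apply]
lemma szz : σz * σz = 1 := by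
  ext i j; fin_cases i <;> fin_cases j <;> simp [σz, Matrix.mul_apply, Fin.sum_univ_two, Matrix.one_apply]
lemma sxy : σx * σy = I • σz := by
  ext i j; fin_cases i <;> fin_cases j <;> simp [σx, σy, σz, Matrix.mul_apply, Fin.sum_univ_two]
lemma syx : σy * σx = (-I) • σz := by
  ext i j; fin_cases i <;> fin_cases j <;> simp [σx, σy, σz, Matrix.mul_apply, Fin.sum_univ_two]
lemma syz : σy * σz = I • σx := by
  ext i j; fin_cases i <;> fin_cases j <;> simp [σx, σy, σz, Matrix.mul_apply, Fin.sum_univ_two]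
lemma szy : σz * σy = (-I) • σx := by
  ext i j; fin_cases i <;> fin_cases j <;> simp [σx, σy, σz, Matrix.mul_apply, Fin.sum_univ_two]
lemma szx : σz * σx = I • σy := by
  ext i j; fin_cases i <;> fin_cases j <;> simp [σx, σy, σz, Matrix.mul_apply, Fin.sum_univ_two]
lemma sxz : σx * σz = (-I) • σy := by
  ext i j; fin_cases i <;> fin_cases j <;> simp [σx, σy, σz, Matrix.mul_apply, Fin.sum_univ_two]

lemma sqPM (i j : Fin 3) : PM i j * PM i j = 1 := by
  fin_cases i <;> fin_cases j <;>
    simp [PM, ← Matrix.mul_kronecker_mul, sxx, syy, szz, Matrix.one_kronecker_one]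


lemma negk (A B : Matrix (Fin 2) (Fin 2) ℂ) : (-A) ⊗ₖ B = -(A ⊗ₖ B) := by
  rw [← neg_one_smul ℂ A, Matrix.smul_kronecker, neg_one_smul]
lemma kneg (A B : Matrix (Fin 2) (Fin 2) ℂ) : A ⊗ₖ (-B) = -(A ⊗ₖ B) := by
  rw [← neg_one_smul ℂ B, Matrix.kronecker_smul, neg_one_smul]

attribute [local simp] Matrix.smul_kronecker Matrix.kronecker_smul negk kneg
  smul_smul Complex.I_mul_I

lemma commRowPM (i j j' : Fin 3) : PM i j * PM i j' = PM i j' * PM i j := by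
  fin_cases i <;> fin_cases j <;> fin_cases j' <;>
    simp [PM, ← Matrix.mul_kronecker_mul, sxx, syy, szz, sxy, syx, syz, szy, szx, sxz]

lemma commColPM (i i' j : Fin 3) : PM i j * PM i' j = PM i' j * PM i j := by
  fin_cases i <;> fin_cases i' <;> fin_cases j <;>
    simp [PM, ← Matrix.mul_kronecker_mul, sxx, syy, szz, sxy, syx, syz, szy, szx, sxz]

lemma thirdRow (i j j' j'' : Fin 3) (h1 : j ≠ j') (h2 : j'' ≠ j) (h3 : j'' ≠ j') :
    PM i j'' = PM i j * PM i j' := by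
  fin_cases i <;> fin_cases j <;> fin_cases j' <;> fin_cases j'' <;>
    simp_all [PM, ← Matrix.mul_kronecker_mul, sxx, syy, szz, sxy, syx, syz, szy, szx, sxz]

lemma thirdCol (i i' i'' j : Fin 3) (h1 : i ≠ i') (h2 : i'' ≠ i) (h3 : i'' ≠ i') :
    PM i'' j = (if j = 2 then (-1 : ℂ) else 1) • (PM i j * PM i' j) := by
  fin_cases i <;> fin_cases i' <;> fin_cases j <;> fin_cases i'' <;>
    simp_all [PM, ← Matrix.mul_kronecker_mul, sxx, syy, szz, sxy, syx, syz, szy, szx, sxz]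


section helpers
variable {n : Type*} [Fintype n] [DecidableEq n]

lemma eig_comm (M N : Matrix n n ℂ) (h : M * N = N * M) (ε c : ℂ) (v : n → ℂ)
    (hc : M.mulVec v = c • v) :
    M.mulVec (((1/2 : ℂ) • (1 + ε • N)).mulVec v)
      = c • ((1/2 : ℂ) • (1 + ε • N)).mulVec v := by
  have hM : M * ((1/2 : ℂ) • (1 + ε • N)) = ((1/2 : ℂ) • (1 + ε • N)) * M := by
    simp only [mul_smul_comm, smul_mul_assoc, mul_add, add_mul, mul_one, one_mul, h]
  rw [Matrix.mulVec_mulVec, hM, ← Matrix.mulVec_mulVec, hc, Matrix.mulVec_smul]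

lemma eig_self (N : Matrix n n ℂ) (hN : N * N = 1) (ε : ℂ) (hε : ε * ε = 1) (v : n → ℂ) :
    N.mulVec (((1/2 : ℂ) • (1 + ε • N)).mulVec v)
      = ε • ((1/2 : ℂ) • (1 + ε • N)).mulVec v := by
  have hM : N * ((1/2 : ℂ) • (1 + ε • N)) = ε • ((1/2 : ℂ) • (1 + ε • N)) := by
    rw [mul_smul_comm, mul_add, mul_one, mul_smul_comm, hN, smul_comm ε ((1/2 : ℂ)),
      smul_add ε, smul_smul ε ε, hε, one_smul, add_comm]
  rw [Matrix.mulVec_mulVec, hM, Matrix.smul_mulVec]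
end helpers

theorem S24_closed_under_Lueders (L : Submodule ℂ (EuclideanSpace ℂ (Fin 2 × Fin 2)))
    (hL : L ∈ S₂₄) (ψ : EuclideanSpace ℂ (Fin 2 × Fin 2)) (hψL : ψ ∈ L) (hψ : ψ ≠ 0)
    (i j : Fin 3) (ε : ℂ) (hε : ε ∈ ({1, -1} : Set ℂ)) :
    ((1 / 2 : ℂ) • (1 + ε • PM i j)).mulVec ψ ≠ 0 →
      Submodule.span ℂ {(WithLp.toLp 2 (((1 / 2 : ℂ) • (1 + ε • PM i j)).mulVec ψ) :
        EuclideanSpace ℂ (Fin 2 × Fin 2))} ∈ S₂₄ := by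
  intro hne
  have hεsq : ε * ε = 1 := by
    rcases hε with rfl | rfl <;> norm_num
  obtain ⟨φ, hφ0, hLspan, hcase⟩ := hL
  -- transfer the eigenvector property from φ to ψ
  rw [hLspan, Submodule.mem_span_singleton] at hψL
  obtain ⟨a, ha⟩ := hψL
  have htrans : ∀ (M : Matrix (Fin 2 × Fin 2) (Fin 2 × Fin 2) ℂ) (c : ℂ),
      M.mulVec φ = c • φ → M.mulVec ψ = c • ψ := by
    intro M c hc
    rw [← ha]
    show M.mulVec (a • (φ : (Fin 2 × Fin 2) → ℂ)) = c • a • (φ : (Fin 2 × Fin 2) → ℂ)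
    rw [Matrix.mulVec_smul, hc, smul_comm]
  have hcase' : (∃ i₀ : Fin 3, ∀ j' : Fin 3, ∃ c : ℂ, (PM i₀ j').mulVec ψ = c • ψ) ∨
      (∃ j₀ : Fin 3, ∀ i' : Fin 3, ∃ c : ℂ, (PM i' j₀).mulVec ψ = c • ψ) := by
    rcases hcase with ⟨i₀, h⟩ | ⟨j₀, h⟩
    · exact Or.inl ⟨i₀, fun j' => (h j').imp fun c hc => htrans _ c hc⟩
    · exact Or.inr ⟨j₀, fun i' => (h i').imp fun c hc => htrans _ c hc⟩
  clear hcase htrans ha hφ0 hLspan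
  refine ⟨_, fun h0 => hne (by simpa using congrArg WithLp.ofLp h0), rfl, ?_⟩
  rcases hcase' with ⟨i₀, h⟩ | ⟨j₀, h⟩
  · by_cases hii : i₀ = i
    · subst hii
      refine Or.inl ⟨i₀, fun j' => ?_⟩
      obtain ⟨c, hc⟩ := h j'
      exact ⟨c, eig_comm _ _ (commRowPM i₀ j' j) ε c ψ hc⟩
    · refine Or.inr ⟨j, fun i' => ?_⟩
      by_cases h1 : i' = i
      · subst h1; exact ⟨ε, eig_self _ (sqPM i' j) ε hεsq ψ⟩
      by_cases h2 : i' = i₀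
      · subst h2
        obtain ⟨c, hc⟩ := h j
        exact ⟨c, eig_comm _ _ (commColPM i' i j) ε c ψ hc⟩
      · obtain ⟨c, hc⟩ := h j
        have hA := eig_comm _ _ (commColPM i₀ i j) ε c ψ hc
        have hB := eig_self _ (sqPM i j) ε hεsq ψ
        have ht := thirdCol i i₀ i' j (fun hh => hii hh.symm) h1 h2
        refine ⟨(if j = 2 then (-1 : ℂ) else 1) * (c * ε), ?_⟩
        rw [ht, Matrix.smul_mulVec, ← Matrix.mulVec_mulVec, hA,
          Matrix.mulVec_smul, hB, smul_smul, smul_smul, mul_assoc]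
  · by_cases hjj : j₀ = j
    · subst hjj
      refine Or.inr ⟨j₀, fun i' => ?_⟩
      obtain ⟨c, hc⟩ := h i'
      exact ⟨c, eig_comm _ _ (commColPM i' i j₀) ε c ψ hc⟩
    · refine Or.inl ⟨i, fun j' => ?_⟩
      by_cases h1 : j' = j
      · subst h1; exact ⟨ε, eig_self _ (sqPM i j') ε hεsq ψ⟩
      by_cases h2 : j' = j₀
      · subst h2
        obtain ⟨c, hc⟩ := h i
        exact ⟨c, eig_comm _ _ (commRowPM i j' j) ε c ψ hc⟩
      · obtain ⟨c, hc⟩ := h i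
        have hA := eig_comm _ _ (commRowPM i j₀ j) ε c ψ hc
        have hB := eig_self _ (sqPM i j) ε hεsq ψ
        have ht := thirdRow i j j₀ j' (fun hh => hjj hh.symm) h1 h2
        refine ⟨c * ε, ?_⟩
        rw [ht, ← Matrix.mulVec_mulVec, hA, Matrix.mulVec_smul, hB, smul_smul]
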